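/- arXiv:math/0608270 — 2 statements merged into one kernel-verified Lean document; each statement's English description precedes it below -/
import Mathlib

section
/- Let C be an arrovian voting system on at least three alternatives, let K be the minimal decisive subset and J the minimal strongly decisive subset of I. Then for every profile (P_1,...,P_n), the aggregate satisfies ⋂_{j ∈ J} P_j ⊆ C(P_1,...,P_n) ⊆ ⋂_{k ∈ K} P_k. Moreover, C equals the Pareto rule C_J (defined by C_J(P) = ⋂_{j∈J} P_j) if and only if K = J. -/
variable {A I : Type*}

/-- A partial preorder: a reflexive and transitive binary relation. -/
def IsPPO (P : A → A → Prop) : Prop := Reflexive P ∧ Transitive P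

/-- A linear (total) preorder: reflexive, transitive and complete. -/
def IsLPO (P : A → A → Prop) : Prop := Reflexive P ∧ Transitive P ∧ ∀ a b, P a b ∨ P b a

/-- A profile of partial preorders. -/
def IsPPOProfile (P : I → A → A → Prop) : Prop := ∀ i, IsPPO (P i)

/-- A profile of linear (total) preorders. -/
def IsLPOProfile (P : I → A → A → Prop) : Prop := ∀ i, IsLPO (P i)

/-- Strict preference. -/
def StrictPref (P : A → A → Prop) (a b : A) : Prop := P a b ∧ ¬ P b a

/-- Indifference. -/
def Indiff (P : A → A → Prop) (a b : A) : Prop := P a b ∧ P b a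

/-- The set `A` contains at least three distinct alternatives. -/
def ThreeAlts (A : Type*) : Prop := ∃ a b c : A, a ≠ b ∧ b ≠ c ∧ a ≠ c

/-- Unanimity. -/
def Unanimity (C : (I → A → A → Prop) → A → A → Prop) : Prop :=
  ∀ P, IsPPOProfile P → ∀ a b : A, (∀ i, P i a b) → C P a b

/-- Independence of irrelevant alternatives. -/
def IIA (C : (I → A → A → Prop) → A → A → Prop) : Prop :=
  ∀ P P' : I → A → A → Prop, IsPPOProfile P → IsPPOProfile P' → ∀ a b : A,
    {i | P i a b} = {i | P' i a b} → {i | P i b a} = {i | P' i b a} →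
    (C P a b ↔ C P' a b)

/-- Neutrality: `C (ρ*P) = ρ*(C P)` for every permutation `ρ` of the alternatives. -/
def Neutrality (C : (I → A → A → Prop) → A → A → Prop) : Prop :=
  ∀ (ρ : Equiv.Perm A) (P : I → A → A → Prop), IsPPOProfile P →
    ∀ x y : A, C (fun i a b => P i (ρ.symm a) (ρ.symm b)) x y ↔ C P (ρ.symm x) (ρ.symm y)

/-- Monotonicity. -/
def Monotonicity (C : (I → A → A → Prop) → A → A → Prop) : Prop :=
  ∀ P P' : I → A → A → Prop, IsPPOProfile P → IsPPOProfile P' → ∀ a b : A,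
    {i | P i a b} ⊆ {i | P' i a b} → {i | P' i b a} ⊆ {i | P i b a} →
    C P a b → C P' a b

/-- `J` is a decisive set: unanimous strict preference on `J` forces weak aggregate preference. -/
def Decisive (C : (I → A → A → Prop) → A → A → Prop) (J : Set I) : Prop :=
  ∀ P, IsPPOProfile P → ∀ a b : A, (∀ j ∈ J, StrictPref (P j) a b) → C P a b

/-- `J` is a strongly decisive set: unanimous weak preference on `J` forces weak aggregate preference. -/
def SDecisive (C : (I → A → A → Prop) → A → A → Prop) (J : Set I) : Prop :=
  ∀ P, IsPPOProfile P → ∀ a b : A, (∀ j ∈ J, P j a b) → C P a b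

set_option linter.unreachableTactic false
set_option linter.unusedTactic false

def tri (x y z : A) (A1 A2 B1 B2 C1 C2 : Set I) : I → A → A → Prop :=
  fun i u v => u = v ∨ (u = x ∧ v = y ∧ i ∈ A1) ∨ (u = y ∧ v = x ∧ i ∈ A2) ∨
    (u = x ∧ v = z ∧ i ∈ B1) ∨ (u = z ∧ v = x ∧ i ∈ B2) ∨
    (u = y ∧ v = z ∧ i ∈ C1) ∨ (u = z ∧ v = y ∧ i ∈ C2)

lemma tri_prof {x y z : A} {A1 A2 B1 B2 C1 C2 : Set I}
    (hxy : x ≠ y) (hxz : x ≠ z) (hyz : y ≠ z)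
    (h1 : A1 ∩ C1 ⊆ B1) (h2 : C1 ∩ B2 ⊆ A2) (h3 : B1 ∩ C2 ⊆ A1)
    (h4 : B2 ∩ A1 ⊆ C2) (h5 : A2 ∩ B1 ⊆ C1) (h6 : C2 ∩ A2 ⊆ B2) :
    IsPPOProfile (tri x y z A1 A2 B1 B2 C1 C2) := by
  intro i
  constructor
  · intro u; exact Or.inl rfl
  · rintro u v w (rfl | ⟨rfl, rfl, h⟩ | ⟨rfl, rfl, h⟩ | ⟨rfl, rfl, h⟩ | ⟨rfl, rfl, h⟩ |
      ⟨rfl, rfl, h⟩ | ⟨rfl, rfl, h⟩) hvw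
    · exact hvw
    all_goals
      rcases hvw with rfl | ⟨e, rfl, h'⟩ | ⟨e, rfl, h'⟩ | ⟨e, rfl, h'⟩ | ⟨e, rfl, h'⟩ |
        ⟨e, rfl, h'⟩ | ⟨e, rfl, h'⟩
    all_goals first
      | (exact (hxy e.symm).elim) | (exact (hxy e).elim)
      | (exact (hxz e.symm).elim) | (exact (hxz e).elim)
      | (exact (hyz e.symm).elim) | (exact (hyz e).elim)
      | (exact Or.inl rfl)
      | (exact Or.inr (Or.inl ⟨rfl, rfl, h⟩))
      | (exact Or.inr (Or.inr (Or.inl ⟨rfl, rfl, h⟩)))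
      | (exact Or.inr (Or.inr (Or.inr (Or.inl ⟨rfl, rfl, h⟩))))
      | (exact Or.inr (Or.inr (Or.inr (Or.inr (Or.inl ⟨rfl, rfl, h⟩)))))
      | (exact Or.inr (Or.inr (Or.inr (Or.inr (Or.inr (Or.inl ⟨rfl, rfl, h⟩))))))
      | (exact Or.inr (Or.inr (Or.inr (Or.inr (Or.inr (Or.inr ⟨rfl, rfl, h⟩))))))
      | (exact Or.inr (Or.inl ⟨rfl, rfl, h1 ⟨h, h'⟩⟩))
      | (exact Or.inr (Or.inr (Or.inl ⟨rfl, rfl, h2 ⟨h, h'⟩⟩)))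
      | (exact Or.inr (Or.inr (Or.inr (Or.inl ⟨rfl, rfl, h1 ⟨h, h'⟩⟩))))
      | (exact Or.inr (Or.inr (Or.inr (Or.inr (Or.inl ⟨rfl, rfl, h6 ⟨h, h'⟩⟩)))))
      | (exact Or.inr (Or.inr (Or.inr (Or.inr (Or.inr (Or.inl ⟨rfl, rfl, h5 ⟨h, h'⟩⟩))))))
      | (exact Or.inr (Or.inr (Or.inr (Or.inr (Or.inr (Or.inr ⟨rfl, rfl, h4 ⟨h', h⟩⟩))))))
      | (exact Or.inr (Or.inl ⟨rfl, rfl, h3 ⟨h, h'⟩⟩))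
      | (exact Or.inr (Or.inr (Or.inl ⟨rfl, rfl, h2 ⟨h', h⟩⟩)))
      | (exact Or.inr (Or.inr (Or.inr (Or.inr (Or.inr (Or.inl ⟨rfl, rfl, h5 ⟨h', h⟩⟩))))))
      | (exact Or.inr (Or.inr (Or.inr (Or.inr (Or.inl ⟨rfl, rfl, h6 ⟨h', h⟩⟩)))))
      | (exact Or.inr (Or.inr (Or.inr (Or.inr (Or.inr (Or.inr ⟨rfl, rfl, h4 ⟨h, h'⟩⟩))))))
      | (exact Or.inr (Or.inr (Or.inr (Or.inl ⟨rfl, rfl, h1 ⟨h', h⟩⟩))))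
      | (exact Or.inr (Or.inl ⟨rfl, rfl, h3 ⟨h', h⟩⟩))

section pats
variable {x y z : A} {A1 A2 B1 B2 C1 C2 : Set I}

lemma tri_pat_xy (hxy : x ≠ y) (hxz : x ≠ z) (hyz : y ≠ z) :
    {i | tri x y z A1 A2 B1 B2 C1 C2 i x y} = A1 := by
  ext i; simp [tri, hxy, hxz, hyz, hxy.symm, hxz.symm, hyz.symm]
lemma tri_pat_yx (hxy : x ≠ y) (hxz : x ≠ z) (hyz : y ≠ z) :
    {i | tri x y z A1 A2 B1 B2 C1 C2 i y x} = A2 := by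
  ext i; simp [tri, hxy, hxz, hyz, hxy.symm, hxz.symm, hyz.symm]
lemma tri_pat_xz (hxy : x ≠ y) (hxz : x ≠ z) (hyz : y ≠ z) :
    {i | tri x y z A1 A2 B1 B2 C1 C2 i x z} = B1 := by
  ext i; simp [tri, hxy, hxz, hyz, hxy.symm, hxz.symm, hyz.symm]
lemma tri_pat_zx (hxy : x ≠ y) (hxz : x ≠ z) (hyz : y ≠ z) :
    {i | tri x y z A1 A2 B1 B2 C1 C2 i z x} = B2 := by
  ext i; simp [tri, hxy, hxz, hyz, hxy.symm, hxz.symm, hyz.symm]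
lemma tri_pat_yz (hxy : x ≠ y) (hxz : x ≠ z) (hyz : y ≠ z) :
    {i | tri x y z A1 A2 B1 B2 C1 C2 i y z} = C1 := by
  ext i; simp [tri, hxy, hxz, hyz, hxy.symm, hxz.symm, hyz.symm]
lemma tri_pat_zy (hxy : x ≠ y) (hxz : x ≠ z) (hyz : y ≠ z) :
    {i | tri x y z A1 A2 B1 B2 C1 C2 i z y} = C2 := by
  ext i; simp [tri, hxy, hxz, hyz, hxy.symm, hxz.symm, hyz.symm]
end pats

def Accepts (C : (I → A → A → Prop) → A → A → Prop) (x y : A) (S1 S2 : Set I) : Prop :=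
  ∀ Q : I → A → A → Prop, IsPPOProfile Q → {i | Q i x y} = S1 → {i | Q i y x} = S2 → C Q x y

lemma accepts_of {C : (I → A → A → Prop) → A → A → Prop} (hIIA : IIA C)
    {P : I → A → A → Prop} (hP : IsPPOProfile P) {x y : A} (h : C P x y) :
    Accepts C x y {i | P i x y} {i | P i y x} := fun Q hQ h1 h2 =>
  (hIIA P Q hP hQ x y h1.symm h2.symm).mp h

section steps
variable {C : (I → A → A → Prop) → A → A → Prop} {K : Set I}

lemma stepA (hC : ∀ P, IsPPOProfile P → IsPPO (C P)) (hIIA : IIA C) (hK : Decisive C K)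
    {x y z : A} (hxy : x ≠ y) (hxz : x ≠ z) (hyz : y ≠ z)
    {Uc Vc S1 S2 : Set I} (hacc : Accepts C x y Uc Vc)
    (c1 : K ∩ Uc ⊆ S1) (c2 : K ∩ S2 ⊆ Vc) (c3 : ∀ i ∈ K, i ∈ S2 → i ∉ Uc) :
    Accepts C x z S1 S2 := by
  intro Q hQ hq1 hq2
  set T := tri x y z Uc Vc S1 S2 (K ∪ (Vc ∩ S1)) (S2 ∩ Uc) with hT
  have hTprof : IsPPOProfile T := by
    refine tri_prof hxy hxz hyz ?_ ?_ ?_ ?_ ?_ ?_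
    · rintro i ⟨hu, hk | ⟨_, hs⟩⟩
      exacts [c1 ⟨hk, hu⟩, hs]
    · rintro i ⟨hk | ⟨hv, _⟩, hs2⟩
      exacts [c2 ⟨hk, hs2⟩, hv]
    · rintro i ⟨_, _, hu⟩; exact hu
    · rintro i ⟨hs2, hu⟩; exact ⟨hs2, hu⟩
    · rintro i ⟨hv, hs1⟩; exact Or.inr ⟨hv, hs1⟩
    · rintro i ⟨⟨hs2, _⟩, _⟩; exact hs2
  have hxyT : C T x y := hacc T hTprof (tri_pat_xy hxy hxz hyz) (tri_pat_yx hxy hxz hyz)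
  have hyzT : C T y z := by
    refine hK T hTprof y z fun i hi => ⟨?_, ?_⟩
    · exact Or.inr (Or.inr (Or.inr (Or.inr (Or.inr (Or.inl ⟨rfl, rfl, Or.inl hi⟩)))))
    · intro h
      have : i ∈ S2 ∩ Uc := by
        rw [← tri_pat_zy (A1 := Uc) (A2 := Vc) (B1 := S1) (B2 := S2)
          (C1 := K ∪ (Vc ∩ S1)) (C2 := S2 ∩ Uc) hxy hxz hyz]
        exact h
      exact c3 i hi this.1 this.2
  have hxzT : C T x z := (hC T hTprof).2 hxyT hyzT
  exact (hIIA T Q hTprof hQ x z ((tri_pat_xz hxy hxz hyz).trans hq1.symm)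
    ((tri_pat_zx hxy hxz hyz).trans hq2.symm)).mp hxzT

lemma stepB (hC : ∀ P, IsPPOProfile P → IsPPO (C P)) (hIIA : IIA C) (hK : Decisive C K)
    {x y z : A} (hxy : x ≠ y) (hxz : x ≠ z) (hyz : y ≠ z)
    {Uc Vc S1 S2 : Set I} (hacc : Accepts C x y Uc Vc)
    (c1 : K ∩ Uc ⊆ S1) (c2 : K ∩ S2 ⊆ Vc) (c3 : ∀ i ∈ K, i ∈ S2 → i ∉ Uc) :
    Accepts C z y S1 S2 := by
  intro Q hQ hq1 hq2
  set T := tri x y z Uc Vc (Uc ∩ S2) (K ∪ (S1 ∩ Vc)) S2 S1 with hT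
  have hTprof : IsPPOProfile T := by
    refine tri_prof hxy hxz hyz ?_ ?_ ?_ ?_ ?_ ?_
    · exact fun i h => h
    · rintro i ⟨hs2, hk | ⟨_, hv⟩⟩
      exacts [c2 ⟨hk, hs2⟩, hv]
    · rintro i ⟨⟨hu, _⟩, _⟩; exact hu
    · rintro i ⟨hk | ⟨hs1, _⟩, hu⟩
      exacts [c1 ⟨hk, hu⟩, hs1]
    · rintro i ⟨_, _, hs2⟩; exact hs2
    · rintro i ⟨hs1, hv⟩; exact Or.inr ⟨hs1, hv⟩
  have hxyT : C T x y := hacc T hTprof (tri_pat_xy hxy hxz hyz) (tri_pat_yx hxy hxz hyz)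
  have hzxT : C T z x := by
    refine hK T hTprof z x fun i hi => ⟨?_, ?_⟩
    · exact Or.inr (Or.inr (Or.inr (Or.inr (Or.inl ⟨rfl, rfl, Or.inl hi⟩))))
    · intro h
      have : i ∈ Uc ∩ S2 := by
        rw [← tri_pat_xz (A1 := Uc) (A2 := Vc) (B1 := Uc ∩ S2) (B2 := K ∪ (S1 ∩ Vc))
          (C1 := S2) (C2 := S1) hxy hxz hyz]
        exact h
      exact c3 i hi this.2 this.1
  have hzyT : C T z y := (hC T hTprof).2 hzxT hxyT
  exact (hIIA T Q hTprof hQ z y ((tri_pat_zy hxy hxz hyz).trans hq1.symm)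
    ((tri_pat_yz hxy hxz hyz).trans hq2.symm)).mp hzyT

lemma finalStep (hC : ∀ P, IsPPOProfile P → IsPPO (C P)) (hIIA : IIA C)
    {x y z : A} (hxy : x ≠ y) (hxz : x ≠ z) (hyz : y ≠ z)
    {S1 S2 S3 S4 T1 T2 : Set I}
    (hacc1 : Accepts C x z S1 S2) (hacc2 : Accepts C z y S3 S4)
    (d1 : T1 ∩ S4 ⊆ S1) (d2 : S4 ∩ S2 ⊆ T2) (d3 : S1 ∩ S3 ⊆ T1)
    (d4 : S2 ∩ T1 ⊆ S3) (d5 : T2 ∩ S1 ⊆ S4) (d6 : S3 ∩ T2 ⊆ S2) :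
    Accepts C x y T1 T2 := by
  intro Q hQ hq1 hq2
  set T := tri x y z T1 T2 S1 S2 S4 S3 with hT
  have hTprof : IsPPOProfile T := tri_prof hxy hxz hyz d1 d2 d3 d4 d5 d6
  have hxzT : C T x z := hacc1 T hTprof (tri_pat_xz hxy hxz hyz) (tri_pat_zx hxy hxz hyz)
  have hzyT : C T z y := hacc2 T hTprof (tri_pat_zy hxy hxz hyz) (tri_pat_yz hxy hxz hyz)
  have hxyT : C T x y := (hC T hTprof).2 hxzT hzyT
  exact (hIIA T Q hTprof hQ x y ((tri_pat_xy hxy hxz hyz).trans hq1.symm)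
    ((tri_pat_yx hxy hxz hyz).trans hq2.symm)).mp hxyT

end steps

lemma third_elt (hA : ThreeAlts A) (a b : A) : ∃ c : A, c ≠ a ∧ c ≠ b := by
  obtain ⟨p, q, r, hpq, hqr, hpr⟩ := hA
  by_cases h1 : p ≠ a ∧ p ≠ b
  · exact ⟨p, h1⟩
  by_cases h2 : q ≠ a ∧ q ≠ b
  · exact ⟨q, h2⟩
  push_neg at h1 h2
  by_cases hpa : p = a
  · subst hpa
    have hqb : q = b := h2 (fun h => hpq h.symm)
    subst hqb
    exact ⟨r, fun h => hpr h.symm, fun h => hqr h.symm⟩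
  · have hpb : p = b := h1 hpa
    subst hpb
    have hqa : q = a := by
      rcases Classical.em (q = a) with h | h
      · exact h
      · exact absurd (h2 h) hpq.symm  -- q = b = p contradicts p ≠ q
    subst hqa
    exact ⟨r, fun h => hqr h.symm, fun h => hpr h.symm⟩

lemma veto {C : (I → A → A → Prop) → A → A → Prop} (hA : ThreeAlts A)
    (hC : ∀ P, IsPPOProfile P → IsPPO (C P)) (hIIA : IIA C) {K : Set I}
    (hK1 : Decisive C K) (hK2 : ∀ K' : Set I, Decisive C K' → K ⊆ K') :
    ∀ P : I → A → A → Prop, IsPPOProfile P → ∀ a b : A, C P a b → ∀ k ∈ K, P k a b := by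
  intro P hP a b hab k hk
  by_cases heq : a = b
  · subst heq; exact (hP k).1 a
  by_contra hku
  have hbase : Accepts C a b {i | P i a b} {i | P i b a} := accepts_of hIIA hP hab
  set U : Set I := {i | P i a b} with hUd
  set V : Set I := {i | P i b a} with hVd
  set Vd : Set I := V \ U with hVdd
  have hkU : k ∉ U := hku
  have mA : ∀ (x y z : A), x ≠ y → x ≠ z → y ≠ z → ∀ V' : Set I, Vd ⊆ V' →
      Accepts C x y U V' → Accepts C x z U Vd := by
    intro x y z hxy hxz hyz V' hsub h
    exact stepA hC hIIA hK1 hxy hxz hyz h (fun i hi => hi.2) (fun i hi => hsub hi.2)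
      (fun i _ hi => hi.2)
  have mB : ∀ (x y z : A), x ≠ y → x ≠ z → y ≠ z → ∀ V' : Set I, Vd ⊆ V' →
      Accepts C x y U V' → Accepts C z y U Vd := by
    intro x y z hxy hxz hyz V' hsub h
    exact stepB hC hIIA hK1 hxy hxz hyz h (fun i hi => hi.2) (fun i hi => hsub hi.2)
      (fun i _ hi => hi.2)
  obtain ⟨c, hca, hcb⟩ := third_elt hA a b
  have hVdV : Vd ⊆ V := fun i hi => hi.1
  have hac : Accepts C a c U Vd := mA a b c heq (Ne.symm hca) (Ne.symm hcb) V hVdV hbase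
  have hab2 : Accepts C a b U Vd :=
    mA a c b (Ne.symm hca) heq hcb Vd (subset_refl _) hac
  have reach : ∀ x y : A, x ≠ y → Accepts C x y U Vd := by
    intro x y hxy
    by_cases hyb : y = b
    · by_cases hxa : x = a
      · rw [hxa, hyb]; exact hab2
      · rw [hyb]
        exact mB a b x heq (fun h => hxa h.symm) (Ne.symm fun h => hxy (h.trans hyb.symm)) Vd
          (subset_refl _) hab2
    · by_cases hya : y = a
      · have hcb' : Accepts C c b U Vd :=
          mB a b c heq (Ne.symm hca) (Ne.symm hcb) Vd (subset_refl _) hab2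
        have hca' : Accepts C c a U Vd :=
          mA c b a hcb hca (fun h => heq h.symm) Vd (subset_refl _) hcb'
        by_cases hxc : x = c
        · rw [hxc, hya]; exact hca'
        · rw [hya]
          exact mB c a x hca (fun h => hxc h.symm) (Ne.symm fun h => hxy (h.trans hya.symm)) Vd
            (subset_refl _) hca'
      · have hay : Accepts C a y U Vd :=
          mA a b y heq (fun h => hya h.symm) (fun h => hyb h.symm) Vd (subset_refl _) hab2
        by_cases hxa : x = a
        · rw [hxa]; exact hay
        · exact mB a y x (fun h => hya h.symm) (fun h => hxa h.symm) (Ne.symm hxy) Vd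
            (subset_refl _) hay
  have hKk : ¬ Decisive C (K \ {k}) := fun hd => (hK2 _ hd hk).2 rfl
  rw [Decisive] at hKk
  push_neg at hKk
  obtain ⟨R, hR, x0, y0, hstr, hnC⟩ := hKk
  have hx0y0 : x0 ≠ y0 := by rintro rfl; exact hnC ((hC R hR).1 x0)
  have hT1 : ∀ i ∈ K, i ≠ k → R i x0 y0 := fun i hi hne =>
    (hstr i ⟨hi, fun h => hne h⟩).1
  have hT2 : ∀ i ∈ K, i ≠ k → ¬ R i y0 x0 := fun i hi hne =>
    (hstr i ⟨hi, fun h => hne h⟩).2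
  obtain ⟨z0, hz0x, hz0y⟩ := third_elt hA x0 y0
  have hrx : Accepts C x0 y0 U Vd := reach x0 y0 hx0y0
  have hKUne : ∀ i, i ∈ K ∩ U → i ≠ k := fun i hi h => hkU (h ▸ hi.2)
  have hc2 : K ∩ ({i | R i y0 x0} \ {k}) ⊆ Vd := by
    rintro i ⟨hiK, hiT2, hik⟩
    exact absurd hiT2 (hT2 i hiK (fun h => hik h))
  have hc3 : ∀ i ∈ K, i ∈ {i | R i y0 x0} \ {k} → i ∉ U := by
    rintro i hiK ⟨hiT2, hik⟩ _
    exact (hT2 i hiK (fun h => hik h)) hiT2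
  have hacc1 : Accepts C x0 z0 ((K ∩ U) ∪ ({i | R i x0 y0} \ {k})) ({i | R i y0 x0} \ {k}) :=
    stepA hC hIIA hK1 hx0y0 (Ne.symm hz0x) (Ne.symm hz0y) hrx (fun i hi => Or.inl hi) hc2 hc3
  have hacc2 : Accepts C z0 y0 ((K ∩ U) ∪ ({i | R i x0 y0} \ {k})) ({i | R i y0 x0} \ {k}) :=
    stepB hC hIIA hK1 hx0y0 (Ne.symm hz0x) (Ne.symm hz0y) hrx (fun i hi => Or.inl hi) hc2 hc3
  have hfin : Accepts C x0 y0 {i | R i x0 y0} {i | R i y0 x0} := by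
    refine finalStep hC hIIA hx0y0 (Ne.symm hz0x) (Ne.symm hz0y) hacc1 hacc2 ?_ ?_ ?_ ?_ ?_ ?_
    · rintro i ⟨h1, _, hik⟩; exact Or.inr ⟨h1, hik⟩
    · rintro i ⟨⟨h1, _⟩, _⟩; exact h1
    · rintro i ⟨h1, _⟩
      rcases h1 with hi | hi
      · exact hT1 i hi.1 (hKUne i hi)
      · exact hi.1
    · rintro i ⟨⟨h1, hik⟩, h2⟩; exact Or.inr ⟨h2, hik⟩
    · rintro i ⟨h1, h2⟩
      rcases h2 with hi | hi
      · exact absurd h1 (hT2 i hi.1 (hKUne i hi))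
      · exact ⟨h1, hi.2⟩
    · rintro i ⟨h1, h2⟩
      rcases h1 with hi | hi
      · exact absurd h2 (hT2 i hi.1 (hKUne i hi))
      · exact ⟨h2, hi.2⟩
  exact hnC (hfin R hR rfl rfl)

theorem pareto_sandwich [Fintype I] (C : (I → A → A → Prop) → A → A → Prop)
    (hA : ThreeAlts A)
    (hC : ∀ P, IsPPOProfile P → IsPPO (C P))
    (hU : Unanimity C) (hIIA : IIA C)
    (K J : Set I)
    (hK : Decisive C K ∧ ∀ K' : Set I, Decisive C K' → K ⊆ K')
    (hJ : SDecisive C J ∧ ∀ J' : Set I, SDecisive C J' → J ⊆ J') :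
    (∀ P : I → A → A → Prop, IsPPOProfile P → ∀ a b : A,
      (∀ j ∈ J, P j a b) → C P a b) ∧
    (∀ P : I → A → A → Prop, IsPPOProfile P → ∀ a b : A,
      C P a b → ∀ k ∈ K, P k a b) ∧
    ((∀ P : I → A → A → Prop, IsPPOProfile P → ∀ a b : A,
        C P a b ↔ ∀ j ∈ J, P j a b) ↔ K = J) := by
  obtain ⟨hK1, hK2⟩ := hK
  obtain ⟨hJ1, hJ2⟩ := hJ
  have part2 : ∀ P : I → A → A → Prop, IsPPOProfile P → ∀ a b : A,
      C P a b → ∀ k ∈ K, P k a b := veto hA hC hIIA hK1 hK2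
  refine ⟨hJ1, part2, ?_, ?_⟩
  · intro hEq
    have hKJ : K ⊆ J := hK2 J (fun P hP a b h => hJ1 P hP a b (fun j hj => (h j hj).1))
    refine Set.Subset.antisymm hKJ ?_
    intro j hj
    by_contra hjK
    obtain ⟨p, q, r, hpq, hqr, hpr⟩ := hA
    have hPprof : IsPPOProfile (fun (i : I) (x y : A) => x = y ∨ (x = p ∧ y = q ∧ i ∈ K)) := by
      intro i
      constructor
      · intro u; exact Or.inl rfl
      · rintro u v w (rfl | ⟨rfl, rfl, h⟩) hvw
        · exact hvw
        · rcases hvw with rfl | ⟨h', rfl, _⟩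
          · exact Or.inr ⟨rfl, rfl, h⟩
          · exact absurd h'.symm hpq
    have hCP : C (fun i x y => x = y ∨ (x = p ∧ y = q ∧ i ∈ K)) p q := by
      refine hK1 _ hPprof p q fun i hi => ⟨Or.inr ⟨rfl, rfl, hi⟩, ?_⟩
      rintro (h | ⟨h, _, _⟩) <;> exact hpq h.symm
    have hjpq := (hEq _ hPprof p q).mp hCP j hj
    rcases hjpq with h | ⟨_, _, hjK'⟩
    · exact hpq h
    · exact hjK hjK'
  · intro hKJ P hP a b
    exact ⟨fun h j hj => part2 P hP a b h j (hKJ.symm ▸ hj), hJ1 P hP a b⟩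
end

section
/- An arrovian voting system C on at least three alternatives satisfies strict unanimity if and only if its minimal decisive set K is nonempty (equivalently, C is non-trivial); and C satisfies strong unanimity if and only if its minimal strongly decisive set J equals I. -/
variable {A I : Type*}

def BadU (C : (I → A → A → Prop) → A → A → Prop) (T0 : Set I) (x y : A) : Prop :=
  ∀ P : I → A → A → Prop, IsPPOProfile P → (∀ i, P i x y) → (∀ i, P i y x ↔ i ∈ T0) → C P y x

theorem exists_third (hA : ThreeAlts A) (x y : A) : ∃ z : A, z ≠ x ∧ z ≠ y := by
  obtain ⟨a, b, c, hab, hbc, hac⟩ := hA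
  by_cases h1 : a = x ∨ a = y
  · by_cases h2 : b = x ∨ b = y
    · refine ⟨c, fun h => ?_, fun h => ?_⟩ <;>
        (subst h; rcases h1 with rfl | rfl <;> rcases h2 with rfl | rfl <;> simp_all)
    · push_neg at h2; exact ⟨b, h2⟩
  · push_neg at h1; exact ⟨a, h1⟩

/-- everyone: `a ≥ b`, `a ≥ c`, `b ~ c`; members of `T0` additionally: `b ≥ a`, `c ≥ a`. -/
def Rel2 (T0 : Set I) (a b c : A) : I → A → A → Prop := fun i u v =>
  u = v ∨ (u = a ∧ (v = b ∨ v = c)) ∨ (u = b ∧ v = c) ∨ (u = c ∧ v = b) ∨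
    ((u = b ∨ u = c) ∧ v = a ∧ i ∈ T0)

set_option maxHeartbeats 1000000 in
theorem Rel2_ppo {T0 : Set I} {a b c : A} (hab : a ≠ b) (hac : a ≠ c) (hbc : b ≠ c) :
    IsPPOProfile (Rel2 T0 a b c) := by
  intro i
  refine ⟨fun u => Or.inl rfl, ?_⟩
  intro u v w huv hvw
  simp only [Rel2] at *
  rcases huv with rfl | ⟨rfl, rfl | rfl⟩ | ⟨rfl, rfl⟩ | ⟨rfl, rfl⟩ | ⟨rfl | rfl, rfl, hi⟩ <;>
    rcases hvw with h2 | h2 | h2 | h2 | h2 <;> tauto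

theorem badU_spread2 {C : (I → A → A → Prop) → A → A → Prop}
    (hC : ∀ P, IsPPOProfile P → IsPPO (C P)) (hU : Unanimity C) (hIIA : IIA C)
    {T0 : Set I} {a b c : A} (hab : a ≠ b) (hac : a ≠ c) (hbc : b ≠ c)
    (h : BadU C T0 a b) : BadU C T0 a c := by
  have hRP : IsPPOProfile (Rel2 T0 a b c) := Rel2_ppo hab hac hbc
  have hRab : ∀ i, Rel2 T0 a b c i a b := fun i => Or.inr (Or.inl ⟨rfl, Or.inl rfl⟩)
  have hRba : ∀ i, Rel2 T0 a b c i b a ↔ i ∈ T0 := by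
    intro i
    constructor
    · rintro (h1 | ⟨h1, h2⟩ | ⟨h1, h2⟩ | ⟨h1, h2⟩ | ⟨h1, h2, hi⟩) <;> simp_all
    · intro hi; exact Or.inr (Or.inr (Or.inr (Or.inr ⟨Or.inl rfl, rfl, hi⟩)))
  have hCba : C (Rel2 T0 a b c) b a := h _ hRP hRab hRba
  have hCcb : C (Rel2 T0 a b c) c b :=
    hU _ hRP c b (fun i => Or.inr (Or.inr (Or.inr (Or.inl ⟨rfl, rfl⟩))))
  have hCca : C (Rel2 T0 a b c) c a := (hC _ hRP).2 hCcb hCba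
  intro P' hP' h1 h2
  have hRca : ∀ i, Rel2 T0 a b c i c a ↔ i ∈ T0 := by
    intro i
    constructor
    · rintro (h1 | ⟨h1, h2⟩ | ⟨h1, h2⟩ | ⟨h1, h2⟩ | ⟨h1, h2, hi⟩) <;> simp_all
    · intro hi; exact Or.inr (Or.inr (Or.inr (Or.inr ⟨Or.inr rfl, rfl, hi⟩)))
  have e1 : {i | Rel2 T0 a b c i c a} = {i | P' i c a} := by
    ext i; simp only [Set.mem_setOf_eq, hRca i, h2 i]
  have e2 : {i | Rel2 T0 a b c i a c} = {i | P' i a c} := by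
    ext i
    simp only [Set.mem_setOf_eq]
    exact ⟨fun _ => h1 i, fun _ => Or.inr (Or.inl ⟨rfl, Or.inr rfl⟩)⟩
  exact (hIIA _ P' hRP hP' c a e1 e2).mp hCca

/-- everyone: `a ~ c`, `a ≥ b`, `c ≥ b`; members of `T0` additionally: `b ≥ a`, `b ≥ c`. -/
def Rel1 (T0 : Set I) (a b c : A) : I → A → A → Prop := fun i u v =>
  u = v ∨ (u = a ∧ v = c) ∨ (u = c ∧ v = a) ∨ ((u = a ∨ u = c) ∧ v = b) ∨
    (u = b ∧ (v = a ∨ v = c) ∧ i ∈ T0)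

set_option maxHeartbeats 1000000 in
theorem Rel1_ppo {T0 : Set I} {a b c : A} (hab : a ≠ b) (hac : a ≠ c) (hbc : b ≠ c) :
    IsPPOProfile (Rel1 T0 a b c) := by
  intro i
  refine ⟨fun u => Or.inl rfl, ?_⟩
  intro u v w huv hvw
  simp only [Rel1] at *
  rcases huv with rfl | ⟨rfl, rfl⟩ | ⟨rfl, rfl⟩ | ⟨rfl | rfl, rfl⟩ | ⟨rfl, rfl | rfl, hi⟩ <;>
    rcases hvw with h2 | h2 | h2 | h2 | h2 <;> tauto

theorem badU_spread1 {C : (I → A → A → Prop) → A → A → Prop}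
    (hC : ∀ P, IsPPOProfile P → IsPPO (C P)) (hU : Unanimity C) (hIIA : IIA C)
    {T0 : Set I} {a b c : A} (hab : a ≠ b) (hac : a ≠ c) (hbc : b ≠ c)
    (h : BadU C T0 a b) : BadU C T0 c b := by
  have hSP : IsPPOProfile (Rel1 T0 a b c) := Rel1_ppo hab hac hbc
  have hSab : ∀ i, Rel1 T0 a b c i a b := fun i =>
    Or.inr (Or.inr (Or.inr (Or.inl ⟨Or.inl rfl, rfl⟩)))
  have hSba : ∀ i, Rel1 T0 a b c i b a ↔ i ∈ T0 := by
    intro i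
    constructor
    · rintro (h1 | ⟨h1, h2⟩ | ⟨h1, h2⟩ | ⟨h1, h2⟩ | ⟨h1, h2, hi⟩) <;> simp_all
    · intro hi; exact Or.inr (Or.inr (Or.inr (Or.inr ⟨rfl, Or.inl rfl, hi⟩)))
  have hCba : C (Rel1 T0 a b c) b a := h _ hSP hSab hSba
  have hCac : C (Rel1 T0 a b c) a c := hU _ hSP a c (fun i => Or.inr (Or.inl ⟨rfl, rfl⟩))
  have hCbc : C (Rel1 T0 a b c) b c := (hC _ hSP).2 hCba hCac
  intro P' hP' h1 h2
  have hSbc : ∀ i, Rel1 T0 a b c i b c ↔ i ∈ T0 := by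
    intro i
    constructor
    · rintro (h1 | ⟨h1, h2⟩ | ⟨h1, h2⟩ | ⟨h1, h2⟩ | ⟨h1, h2, hi⟩) <;> simp_all
    · intro hi; exact Or.inr (Or.inr (Or.inr (Or.inr ⟨rfl, Or.inr rfl, hi⟩)))
  have e1 : {i | Rel1 T0 a b c i b c} = {i | P' i b c} := by
    ext i; simp only [Set.mem_setOf_eq, hSbc i, h2 i]
  have e2 : {i | Rel1 T0 a b c i c b} = {i | P' i c b} := by
    ext i
    simp only [Set.mem_setOf_eq]
    exact ⟨fun _ => h1 i, fun _ => Or.inr (Or.inr (Or.inr (Or.inl ⟨Or.inr rfl, rfl⟩)))⟩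
  exact (hIIA _ P' hSP hP' b c e1 e2).mp hCbc

theorem badU_all {C : (I → A → A → Prop) → A → A → Prop} (hA : ThreeAlts A)
    (hC : ∀ P, IsPPOProfile P → IsPPO (C P)) (hU : Unanimity C) (hIIA : IIA C)
    {T0 : Set I} {a b : A} (hab : a ≠ b) (h : BadU C T0 a b) :
    ∀ x y : A, x ≠ y → BadU C T0 x y := by
  -- first: all pairs with second coordinate ≠ a
  have step1 : ∀ x y : A, x ≠ y → y ≠ a → BadU C T0 x y := by
    intro x y hxy hya
    have hay : BadU C T0 a y := by
      by_cases hyb : y = b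
      · exact hyb ▸ h
      · exact badU_spread2 hC hU hIIA hab (Ne.symm hya) (fun e => hyb e.symm) h
    by_cases hxa : x = a
    · exact hxa ▸ hay
    · exact badU_spread1 hC hU hIIA (Ne.symm hya) (fun e => hxa e.symm) (Ne.symm hxy) hay
  intro x y hxy
  by_cases hya : y = a
  · obtain ⟨z, hzx, hzy⟩ := exists_third hA x y
    have hza : z ≠ a := fun e => hzy (e.trans hya.symm)
    have hxz : BadU C T0 x z := step1 x z (Ne.symm hzx) hza
    exact badU_spread2 hC hU hIIA (Ne.symm hzx) hxy hzy hxz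
  · exact step1 x y hxy hya

/-- everyone: `z ≥ x`, `z ≥ y`; `x ≥ y` on `S`, `y ≥ x` on `T'`, `x ≥ z` on `T0`,
`y ≥ z` on `T0 ∩ T'`. -/
def RelQ (S T' T0 : Set I) (x y z : A) : I → A → A → Prop := fun i u v =>
  u = v ∨ (u = z ∧ (v = x ∨ v = y)) ∨ (u = x ∧ v = y ∧ i ∈ S) ∨ (u = y ∧ v = x ∧ i ∈ T') ∨
    (u = x ∧ v = z ∧ i ∈ T0) ∨ (u = y ∧ v = z ∧ i ∈ T0 ∧ i ∈ T')

set_option maxHeartbeats 2000000 in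
theorem RelQ_ppo {S T' T0 : Set I} {x y z : A} (hsub : T0 ⊆ S)
    (hxy : x ≠ y) (hxz : x ≠ z) (hyz : y ≠ z) :
    IsPPOProfile (RelQ S T' T0 x y z) := by
  intro i
  refine ⟨fun u => Or.inl rfl, ?_⟩
  have hiS : i ∈ T0 → i ∈ S := fun h => hsub h
  intro u v w huv hvw
  simp only [RelQ] at *
  rcases huv with h1 | ⟨h1, h2 | h2⟩ | ⟨h1, h2, hm⟩ | ⟨h1, h2, hm⟩ | ⟨h1, h2, hm⟩ |
      ⟨h1, h2, hm, hm'⟩ <;>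
    rcases hvw with g1 | ⟨g1, g2 | g2⟩ | ⟨g1, g2, gm⟩ | ⟨g1, g2, gm⟩ | ⟨g1, g2, gm⟩ |
      ⟨g1, g2, gm, gm'⟩ <;>
    simp_all

theorem RelQ_xz {S T' T0 : Set I} {x y z : A}
    (hxy : x ≠ y) (hxz : x ≠ z) (hyz : y ≠ z) (i : I) :
    RelQ S T' T0 x y z i x z ↔ i ∈ T0 := by
  constructor
  · rintro (h1 | ⟨h1, h2 | h2⟩ | ⟨h1, h2, hm⟩ | ⟨h1, h2, hm⟩ | ⟨h1, h2, hm⟩ |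
      ⟨h1, h2, hm, hm2⟩) <;> first | tauto | simp_all
  · intro hi; exact Or.inr (Or.inr (Or.inr (Or.inr (Or.inl ⟨rfl, rfl, hi⟩))))

theorem RelQ_xy {S T' T0 : Set I} {x y z : A}
    (hxy : x ≠ y) (hxz : x ≠ z) (hyz : y ≠ z) (i : I) :
    RelQ S T' T0 x y z i x y ↔ i ∈ S := by
  constructor
  · rintro (h1 | ⟨h1, h2 | h2⟩ | ⟨h1, h2, hm⟩ | ⟨h1, h2, hm⟩ | ⟨h1, h2, hm⟩ |
      ⟨h1, h2, hm, hm2⟩) <;> first | tauto | simp_all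
  · intro hi; exact Or.inr (Or.inr (Or.inl ⟨rfl, rfl, hi⟩))

theorem RelQ_yx {S T' T0 : Set I} {x y z : A}
    (hxy : x ≠ y) (hxz : x ≠ z) (hyz : y ≠ z) (i : I) :
    RelQ S T' T0 x y z i y x ↔ i ∈ T' := by
  constructor
  · rintro (h1 | ⟨h1, h2 | h2⟩ | ⟨h1, h2, hm⟩ | ⟨h1, h2, hm⟩ | ⟨h1, h2, hm⟩ |
      ⟨h1, h2, hm, hm2⟩) <;> first | tauto | simp_all
  · intro hi; exact Or.inr (Or.inr (Or.inr (Or.inl ⟨rfl, rfl, hi⟩)))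

theorem badU_key {C : (I → A → A → Prop) → A → A → Prop} (hA : ThreeAlts A)
    (hC : ∀ P, IsPPOProfile P → IsPPO (C P)) (hU : Unanimity C) (hIIA : IIA C)
    {T0 : Set I} {a b : A} (hab : a ≠ b) (h : BadU C T0 a b) :
    ∀ Q, IsPPOProfile Q → ∀ x y : A, (∀ i ∈ T0, Q i x y) → C Q x y := by
  intro Q hQ x y hT
  by_cases hxy : x = y
  · exact hxy ▸ (hC Q hQ).1 x
  obtain ⟨z, hzx, hzy⟩ := exists_third hA x y
  have hxz : x ≠ z := Ne.symm hzx
  have hyz : y ≠ z := Ne.symm hzy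
  have hsub : T0 ⊆ {i | Q i x y} := fun i hi => hT i hi
  have hQ'P : IsPPOProfile (RelQ {i | Q i x y} {i | Q i y x} T0 x y z) :=
    RelQ_ppo hsub hxy hxz hyz
  have hbzx : BadU C T0 z x := badU_all hA hC hU hIIA hab h z x hzx
  have hCxz : C (RelQ {i | Q i x y} {i | Q i y x} T0 x y z) x z :=
    hbzx _ hQ'P (fun i => Or.inr (Or.inl ⟨rfl, Or.inl rfl⟩)) (RelQ_xz hxy hxz hyz)
  have hCzy : C (RelQ {i | Q i x y} {i | Q i y x} T0 x y z) z y :=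
    hU _ hQ'P z y (fun i => Or.inr (Or.inl ⟨rfl, Or.inr rfl⟩))
  have hCxy : C (RelQ {i | Q i x y} {i | Q i y x} T0 x y z) x y :=
    (hC _ hQ'P).2 hCxz hCzy
  have e1 : {i | RelQ {i | Q i x y} {i | Q i y x} T0 x y z i x y} = {i | Q i x y} :=
    Set.ext fun i => RelQ_xy hxy hxz hyz i
  have e2 : {i | RelQ {i | Q i x y} {i | Q i y x} T0 x y z i y x} = {i | Q i y x} :=
    Set.ext fun i => RelQ_yx hxy hxz hyz i
  exact (hIIA _ Q hQ'P hQ x y e1 e2).mp hCxy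

theorem strict_and_strong_unanimity [Fintype I] (C : (I → A → A → Prop) → A → A → Prop)
    (hA : ThreeAlts A)
    (hC : ∀ P, IsPPOProfile P → IsPPO (C P))
    (hU : Unanimity C) (hIIA : IIA C)
    (K J : Set I)
    (hK : Decisive C K ∧ ∀ K' : Set I, Decisive C K' → K ⊆ K')
    (hJ : SDecisive C J ∧ ∀ J' : Set I, SDecisive C J' → J ⊆ J') :
    ((∀ P : I → A → A → Prop, IsPPOProfile P → ∀ a b : A,
        (∀ i, StrictPref (P i) a b) → StrictPref (C P) a b) ↔ K.Nonempty) ∧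
    ((∀ P : I → A → A → Prop, IsPPOProfile P → ∀ a b : A,
        (∀ i, P i a b) → (∃ j, StrictPref (P j) a b) → StrictPref (C P) a b) ↔
      J = Set.univ) := by
  obtain ⟨a0, b0, c0, hab0, hbc0, hac0⟩ := hA
  have hA' : ThreeAlts A := ⟨a0, b0, c0, hab0, hbc0, hac0⟩
  constructor
  · constructor
    · intro hSU
      rw [Set.nonempty_iff_ne_empty]
      intro hKe
      have hP0 : IsPPOProfile (fun (_ : I) (u v : A) => u = v ∨ (u = a0 ∧ v = b0)) := by
        intro i
        refine ⟨fun u => Or.inl rfl, ?_⟩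
        rintro u v w (h1 | ⟨h1, h2⟩) (g1 | ⟨g1, g2⟩) <;> first | tauto | simp_all
      have hstrict : ∀ i : I,
          StrictPref ((fun (_ : I) (u v : A) => u = v ∨ (u = a0 ∧ v = b0)) i) a0 b0 := by
        intro i
        refine ⟨Or.inr ⟨rfl, rfl⟩, ?_⟩
        rintro (h1 | ⟨h1, h2⟩) <;> first | tauto | simp_all
      have h1 := hSU _ hP0 a0 b0 hstrict
      have h2 : C (fun (_ : I) (u v : A) => u = v ∨ (u = a0 ∧ v = b0)) b0 a0 :=
        hK.1 _ hP0 b0 a0 (fun j hj => absurd (hKe ▸ hj) (Set.notMem_empty j))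
      exact h1.2 h2
    · rintro ⟨k, hk⟩ P hP a b hstrict
      refine ⟨hU P hP a b fun i => (hstrict i).1, fun hba => ?_⟩
      have hab : a ≠ b := fun e => by subst e; exact (hstrict k).2 ((hP k).1 a)
      have hbad : BadU C {i | P i b a} a b := by
        intro P' hP' h1' h2'
        have eba : {i | P i b a} = {i | P' i b a} :=
          Set.ext fun i => ⟨fun h => (h2' i).mpr h, fun h => (h2' i).mp h⟩
        have eab : {i | P i a b} = {i | P' i a b} :=
          Set.ext fun i => ⟨fun _ => h1' i, fun _ => (hstrict i).1⟩
        exact (hIIA P P' hP hP' b a eba eab).mp hba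
      have hD : Decisive C ∅ := fun Q hQ x y _ =>
        badU_key hA' hC hU hIIA hab hbad Q hQ x y (fun i hi => absurd hi (hstrict i).2)
      exact absurd (hK.2 ∅ hD hk) (Set.notMem_empty k)
  · constructor
    · intro hSU
      by_contra hJu
      obtain ⟨j, hj⟩ := (Set.ne_univ_iff_exists_notMem J).mp hJu
      have hPj : IsPPOProfile
          (fun (i : I) (u v : A) => u = v ∨ (u = a0 ∧ v = b0) ∨ (u = b0 ∧ v = a0 ∧ i ≠ j)) := by
        intro i
        refine ⟨fun u => Or.inl rfl, ?_⟩
        rintro u v w (h1 | ⟨h1, h2⟩ | ⟨h1, h2, h3⟩) (g1 | ⟨g1, g2⟩ | ⟨g1, g2, g3⟩) <;>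
          first | tauto | simp_all
      have hweak : ∀ i : I,
          (fun (i : I) (u v : A) => u = v ∨ (u = a0 ∧ v = b0) ∨ (u = b0 ∧ v = a0 ∧ i ≠ j)) i a0 b0 :=
        fun i => Or.inr (Or.inl ⟨rfl, rfl⟩)
      have hstrictj : StrictPref
          ((fun (i : I) (u v : A) => u = v ∨ (u = a0 ∧ v = b0) ∨ (u = b0 ∧ v = a0 ∧ i ≠ j)) j) a0 b0 := by
        refine ⟨hweak j, ?_⟩
        rintro (h1 | ⟨h1, h2⟩ | ⟨h1, h2, h3⟩) <;> first | tauto | simp_all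
      have h1 := hSU _ hPj a0 b0 hweak ⟨j, hstrictj⟩
      have h2 : C (fun (i : I) (u v : A) =>
          u = v ∨ (u = a0 ∧ v = b0) ∨ (u = b0 ∧ v = a0 ∧ i ≠ j)) b0 a0 :=
        hJ.1 _ hPj b0 a0 (fun i hi => Or.inr (Or.inr ⟨rfl, rfl, fun e => hj (e ▸ hi)⟩))
      exact h1.2 h2
    · rintro hJu P hP a b hweak ⟨j, hj⟩
      refine ⟨hU P hP a b hweak, fun hba => ?_⟩
      have hab : a ≠ b := fun e => by subst e; exact hj.2 ((hP j).1 a)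
      have hbad : BadU C {i | P i b a} a b := by
        intro P' hP' h1' h2'
        have eba : {i | P i b a} = {i | P' i b a} :=
          Set.ext fun i => ⟨fun h => (h2' i).mpr h, fun h => (h2' i).mp h⟩
        have eab : {i | P i a b} = {i | P' i a b} :=
          Set.ext fun i => ⟨fun _ => h1' i, fun _ => hweak i⟩
        exact (hIIA P P' hP hP' b a eba eab).mp hba
      have hSD : SDecisive C {i | i ≠ j} := fun Q hQ x y hcond =>
        badU_key hA' hC hU hIIA hab hbad Q hQ x y
          (fun i hi => hcond i (fun e => hj.2 (e ▸ hi)))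
      have hsub := hJ.2 _ hSD
      exact (hsub (hJu.symm ▸ Set.mem_univ j)) rfl
end
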